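/- Let p be a prime, let χ be a primitive Dirichlet character modulo p², and let ψ be a Dirichlet character modulo p² whose conductor divides p (i.e., ψ is not primitive). Then g(χ, ψ) = 0. -/

import Mathlib

/-- g(χ,ψ) = ∑_{t,u ∈ ℤ/qℤ} χ(t)·conj(χ)(t+1)·conj(χ)(u)·χ(u+1)·ψ(ut−1). -/
noncomputable def gSum {q : ℕ} [NeZero q] (χ ψ : DirichletCharacter ℂ q) : ℂ :=
  ∑ t : ZMod q, ∑ u : ZMod q,
    χ t * (starRingEnd ℂ) (χ (t + 1)) * (starRingEnd ℂ) (χ u) * χ (u + 1) * ψ (u * t - 1)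

private lemma mul_conj_eq_one {z : ℂ} (h : ‖z‖ = 1) : z * (starRingEnd ℂ) z = 1 := by
  rw [Complex.mul_conj, Complex.normSq_eq_norm_sq, h]
  norm_num

/-- For p prime, χ primitive modulo p², and ψ a non-primitive character modulo p²
(i.e. of conductor dividing p), one has g(χ,ψ) = 0. -/
theorem gSum_eq_zero_of_not_primitive (p : ℕ) [Fact p.Prime]
    (χ ψ : DirichletCharacter ℂ (p ^ 2)) (hχ : χ.IsPrimitive)
    (hψ : ψ.conductor ∣ p) :
    gSum χ ψ = 0 := by
  have hp : p.Prime := Fact.out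
  have hdvd : p ∣ p ^ 2 := dvd_pow_self p two_ne_zero
  set P : ZMod (p ^ 2) := (p : ZMod (p ^ 2)) with hPdef
  have hP : P * P = 0 := by
    rw [hPdef, ← Nat.cast_mul, ← pow_two, ZMod.natCast_self]
  -- ψ factors through level p
  obtain ⟨hcd, ψ₀, hψ₀⟩ := ψ.factorsThrough_conductor
  set ψ₁ : DirichletCharacter ℂ p := DirichletCharacter.changeLevel hψ ψ₀ with hψ₁def
  have hψeq : ψ = DirichletCharacter.changeLevel hdvd ψ₁ := by
    rw [hψ₁def, ← DirichletCharacter.changeLevel_trans]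
    exact hψ₀
  have hψval : ∀ x : ZMod (p ^ 2), ψ x = ψ₁ (ZMod.castHom hdvd (ZMod p) x) := by
    intro x
    by_cases hx : IsUnit x
    · conv_lhs => rw [hψeq, ← hx.unit_spec]
      rw [DirichletCharacter.changeLevel_eq_cast_of_dvd, hx.unit_spec, ZMod.castHom_apply]
    · have h2 : ¬ IsUnit (ZMod.castHom hdvd (ZMod p) x) := by
        intro h
        apply hx
        have hx2 : ZMod.castHom hdvd (ZMod p) x = ((x.val : ℕ) : ZMod p) := by
          rw [ZMod.castHom_apply, ← ZMod.natCast_val]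
        rw [hx2, ZMod.isUnit_iff_coprime] at h
        have : ((x.val : ℕ) : ZMod (p ^ 2)) = x := by
          rw [ZMod.natCast_val, ZMod.cast_id]
        rw [← this, ZMod.isUnit_iff_coprime]
        exact h.pow_right 2
      rw [ψ.map_nonunit hx, ψ₁.map_nonunit h2]
  -- χ(1+p) ≠ 1
  have hpow : ∀ k : ℕ, (1 + P) ^ k = 1 + P * (k : ZMod (p ^ 2)) := by
    intro k
    induction k with
    | zero => simp
    | succ n ih =>
      have hstep : (1 + P) ^ (n + 1) = (1 + P) ^ n * (1 + P) := pow_succ _ _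
      push_cast
      rw [hstep, ih]
      linear_combination (n : ZMod (p ^ 2)) * hP
  have χc1 : χ (1 + P) ≠ 1 := by
    intro h1
    have hker : (ZMod.unitsMap hdvd).ker ≤ χ.toUnitHom.ker := by
      intro x hx
      rw [MonoidHom.mem_ker] at hx ⊢
      have hcast : ZMod.castHom hdvd (ZMod p) ((x : ZMod (p ^ 2))) = 1 := by
        have := congrArg (Units.val) hx
        simpa [ZMod.unitsMap_def] using this
      have hdvdval : p ∣ ((x : ZMod (p ^ 2)) - 1).val := by
        have h0 : ZMod.castHom hdvd (ZMod p) ((x : ZMod (p ^ 2)) - 1) = 0 := by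
          rw [map_sub, hcast, map_one, sub_self]
        rwa [ZMod.castHom_apply, ← ZMod.natCast_val,
          ZMod.natCast_eq_zero_iff] at h0
      obtain ⟨m, hm⟩ := hdvdval
      have hxeq : (x : ZMod (p ^ 2)) = 1 + P * (m : ZMod (p ^ 2)) := by
        have h2 : ((x : ZMod (p ^ 2)) - 1) = (((((x : ZMod (p ^ 2)) - 1)).val : ℕ) : ZMod (p ^ 2)) := by
          rw [ZMod.natCast_val, ZMod.cast_id]
        rw [hm] at h2
        push_cast at h2
        linear_combination h2
      have hχx : χ ((x : ZMod (p ^ 2))) = 1 := by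
        rw [hxeq, ← hpow, map_pow, h1, one_pow]
      exact Units.ext (by rw [MulChar.coe_toUnitHom, hχx, Units.val_one])
    have hft : χ.FactorsThrough p :=
      (DirichletCharacter.factorsThrough_iff_ker_unitsMap hdvd).mpr hker
    have hle : χ.conductor ≤ p := Nat.sInf_le hft
    have hχ' : χ.conductor = p ^ 2 := hχ
    rw [hχ'] at hle
    nlinarith [hp.two_le]
  -- the change of variables t ↦ (1+p)t(1+pt)
  set Φ : ZMod (p ^ 2) ≃ ZMod (p ^ 2) :=
    { toFun := fun t => (1 + P) * t * (1 + P * t)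
      invFun := fun s => (1 - P) * s * (1 - P * s)
      left_inv := fun t => by
        show (1 - P) * ((1 + P) * t * (1 + P * t)) * (1 - P * ((1 + P) * t * (1 + P * t))) = t
        linear_combination (-t - t^2 - 2*t^3 - 2*P*t^3 - P*t^4 + P^2*t^2 + 2*P^2*t^3
          - P^2*t^4 + 2*P^3*t^3 + P^3*t^4 + P^4*t^4) * hP
      right_inv := fun t => by
        show (1 + P) * ((1 - P) * t * (1 - P * t)) * (1 + P * ((1 - P) * t * (1 - P * t))) = t
        linear_combination (-t - t^2 - 2*t^3 + 2*P*t^3 + P*t^4 + P^2*t^2 + 2*P^2*t^3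
          - P^2*t^4 - 2*P^3*t^3 - P^3*t^4 + P^4*t^4) * hP } with hΦdef
  have hΦ : ∀ t, Φ t = (1 + P) * t * (1 + P * t) := fun _ => rfl
  have he1 : ∀ t : ZMod (p ^ 2), χ (1 + P * t) * (starRingEnd ℂ) (χ (1 + P * t)) = 1 := by
    intro t
    have he : IsUnit (1 + P * t) := by
      refine IsUnit.of_mul_eq_one (1 - P * t) ?_
      linear_combination (-(t*t)) * hP
    have hn := χ.unit_norm_eq_one he.unit
    rw [he.unit_spec] at hn
    exact mul_conj_eq_one hn
  have key : ∀ t u : ZMod (p ^ 2),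
      χ (Φ t) * (starRingEnd ℂ) (χ (Φ t + 1)) * (starRingEnd ℂ) (χ u) * χ (u + 1)
        * ψ (u * Φ t - 1)
      = χ (1 + P) * (χ t * (starRingEnd ℂ) (χ (t + 1)) * (starRingEnd ℂ) (χ u) * χ (u + 1)
        * ψ (u * t - 1)) := by
    intro t u
    have hφ1 : Φ t + 1 = (t + 1) * (1 + P * t) := by
      rw [hΦ]
      linear_combination (t*t) * hP
    have hψ2 : ψ (u * Φ t - 1) = ψ (u * t - 1) := by
      rw [hψval, hψval]
      congr 1
      have h0 : (ZMod.castHom hdvd (ZMod p)) P = 0 := by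
        rw [hPdef, map_natCast, ZMod.natCast_self]
      rw [hΦ]
      simp [map_sub, map_mul, map_add, map_one, h0]
    rw [hφ1, hψ2, hΦ]
    simp only [map_mul]
    linear_combination (χ (1 + P) * χ t * (starRingEnd ℂ) (χ (t + 1))
      * (starRingEnd ℂ) (χ u) * χ (u + 1) * ψ (u * t - 1)) * he1 t
  have hg : gSum χ ψ = χ (1 + P) * gSum χ ψ := by
    conv_lhs => rw [gSum, ← Equiv.sum_comp Φ (fun t => ∑ u : ZMod (p ^ 2),
      χ t * (starRingEnd ℂ) (χ (t + 1)) * (starRingEnd ℂ) (χ u) * χ (u + 1) * ψ (u * t - 1))]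
    rw [gSum, Finset.mul_sum]
    refine Finset.sum_congr rfl fun t _ => ?_
    rw [Finset.mul_sum]
    exact Finset.sum_congr rfl fun u _ => key t u
  have h0 : (1 - χ (1 + P)) * gSum χ ψ = 0 := by linear_combination hg
  rcases mul_eq_zero.mp h0 with h | h
  · exact absurd (sub_eq_zero.mp h).symm χc1
  · exact h
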